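/- For all t with -1 < t < 1, ∫_{-∞}^{∞} z e^{tz} e^{-z}/(1 + e^{-z})^2 dz = π csc(πt)(1 - πt cot(πt)) (with the convention of the analytic continuation at t = 0, where the value is 0). -/

import Mathlib

open Real MeasureTheory
open Filter Set

lemma logf_pos (z : ℝ) : 0 < Real.exp (-z) / (1 + Real.exp (-z)) ^ 2 := by positivity

lemma logf_le (z : ℝ) : Real.exp (-z) / (1 + Real.exp (-z)) ^ 2 ≤ Real.exp (-|z|) := by
  rcases le_total 0 z with hz | hz
  · rw [abs_of_nonneg hz]
    have h1 : (1:ℝ) ≤ (1 + Real.exp (-z)) ^ 2 := by nlinarith [Real.exp_pos (-z)]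
    calc Real.exp (-z) / (1 + Real.exp (-z)) ^ 2 ≤ Real.exp (-z) :=
          div_le_self (Real.exp_pos _).le h1
      _ ≤ Real.exp (-z) := le_rfl
  · rw [abs_of_nonpos hz, neg_neg]
    rw [div_le_iff₀ (by positivity)]
    have key : Real.exp z * Real.exp (-z) = 1 := by rw [← Real.exp_add]; simp
    nlinarith [Real.exp_pos z, Real.exp_pos (-z)]

lemma cont_logf : Continuous fun z : ℝ => Real.exp (-z) / (1 + Real.exp (-z)) ^ 2 := by
  apply Continuous.div (by continuity) (by continuity)
  intro z; positivity

lemma int_bound (n : ℕ) {c : ℝ} (hc : 0 < c) :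
    Integrable (fun z : ℝ => |z| ^ n * Real.exp (-(c * |z|))) := by
  have hcont : Continuous fun z : ℝ => |z| ^ n * Real.exp (-(c * |z|)) := by continuity
  apply hcont.locallyIntegrable.integrable_of_isBigO_atTop_of_norm_isNegInvariant
    (g := fun x : ℝ => Real.exp (-(c/2) * x))
  · filter_upwards with x
    simp [Function.comp, abs_neg]
  · have h1 : Tendsto (fun x : ℝ => (c/2*x) ^ n * Real.exp (-(c/2*x))) atTop (nhds 0) :=
      (tendsto_pow_mul_exp_neg_atTop_nhds_zero n).comp (tendsto_id.const_mul_atTop (half_pos hc))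
    have h2 : Tendsto (fun x : ℝ => x ^ n * Real.exp (-(c/2*x))) atTop (nhds 0) := by
      have h3 := h1.const_mul ((2/c) ^ n)
      rw [mul_zero] at h3
      refine h3.congr' ?_
      filter_upwards with x
      rw [← mul_assoc, ← mul_pow]
      congr 2
      field_simp
    rw [Asymptotics.isBigO_iff]
    refine ⟨1, ?_⟩
    filter_upwards [h2.eventually_lt_const one_pos, eventually_ge_atTop (0:ℝ)] with x hx1 hx0
    rw [Real.norm_eq_abs, Real.norm_eq_abs, abs_of_nonneg (by positivity),
      abs_of_nonneg (Real.exp_pos _).le, abs_of_nonneg hx0]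
    have : Real.exp (-(c * x)) = Real.exp (-(c/2*x)) * Real.exp (-(c/2)*x) := by
      rw [← Real.exp_add]; ring_nf
    rw [this, one_mul, ← mul_assoc]
    exact mul_le_of_le_one_left (Real.exp_pos _).le (le_of_lt hx1)
  · exact ⟨Ioi 0, Ioi_mem_atTop 0, exp_neg_integrableOn_Ioi 0 (half_pos hc)⟩

lemma exp_mul_logf_le {c : ℝ} (h : |c| < 1) (z : ℝ) :
    Real.exp (c * z) * (Real.exp (-z) / (1 + Real.exp (-z)) ^ 2) ≤ Real.exp (-((1 - |c|) * |z|)) := by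
  calc Real.exp (c * z) * (Real.exp (-z) / (1 + Real.exp (-z)) ^ 2)
      ≤ Real.exp (c * z) * Real.exp (-|z|) := by
        have := Real.exp_pos (c*z)
        gcongr
        exact logf_le z
    _ = Real.exp (c * z - |z|) := by rw [← Real.exp_add]; ring_nf
    _ ≤ Real.exp (-((1 - |c|) * |z|)) := by
        apply Real.exp_le_exp.mpr
        have : c * z ≤ |c| * |z| := by
          calc c * z ≤ |c * z| := le_abs_self _
            _ = |c| * |z| := abs_mul c z
        nlinarith [abs_nonneg z]

lemma int_pow_exp_mul (n : ℕ) {c : ℝ} (h : |c| < 1) :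
    Integrable (fun z : ℝ => |z| ^ n *
      (Real.exp (c * z) * (Real.exp (-z) / (1 + Real.exp (-z)) ^ 2))) := by
  have hb : (0:ℝ) < 1 - |c| := by linarith
  refine (int_bound n hb).mono ?_ (Filter.Eventually.of_forall fun z => ?_)
  · exact ((continuous_abs.pow n).mul
      ((Real.continuous_exp.comp (continuous_const.mul continuous_id)).mul cont_logf)).aestronglyMeasurable
  · have hfz : (0:ℝ) < Real.exp (-z) / (1 + Real.exp (-z)) ^ 2 := by positivity
    rw [Real.norm_of_nonneg (by positivity : (0:ℝ) ≤ |z| ^ n *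
      (Real.exp (c * z) * (Real.exp (-z) / (1 + Real.exp (-z)) ^ 2))),
      Real.norm_of_nonneg (by positivity : (0:ℝ) ≤ |z| ^ n * Real.exp (-((1 - |c|) * |z|)))]
    gcongr
    exact exp_mul_logf_le h z

lemma integ0 {c : ℝ} (h : |c| < 1) :
    Integrable (fun z : ℝ => Real.exp (c * z) * (Real.exp (-z) / (1 + Real.exp (-z)) ^ 2)) := by
  simpa using int_pow_exp_mul 0 h

lemma integ1 {c : ℝ} (h : |c| < 1) :
    Integrable (fun z : ℝ => z * Real.exp (c * z) * (Real.exp (-z) / (1 + Real.exp (-z)) ^ 2)) := by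
  refine (int_pow_exp_mul 1 h).mono ?_ (Filter.Eventually.of_forall fun z => ?_)
  · exact ((continuous_id.mul (Real.continuous_exp.comp (continuous_const.mul continuous_id))).mul
      cont_logf).aestronglyMeasurable
  · have hfz : (0:ℝ) < Real.exp (-z) / (1 + Real.exp (-z)) ^ 2 := by positivity
    rw [Real.norm_eq_abs, abs_mul, abs_mul, abs_of_nonneg (Real.exp_pos (c*z)).le,
      abs_of_nonneg hfz.le,
      Real.norm_of_nonneg (by positivity : (0:ℝ) ≤ |z| ^ 1 *
        (Real.exp (c * z) * (Real.exp (-z) / (1 + Real.exp (-z)) ^ 2))), pow_one, mul_assoc]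

lemma real_beta {s : ℝ} (h1 : -1 < s) (h2 : s < 1) :
    ∫ y in Set.Ioo (0:ℝ) 1, y ^ s * (1 - y) ^ (-s) = Real.Gamma (1+s) * Real.Gamma (1-s) := by
  have hu : 0 < ((((1+s:ℝ)):ℂ)).re := by simpa using by linarith
  have hv : 0 < ((((1-s:ℝ)):ℂ)).re := by simpa using by linarith
  have hbeta := Complex.Gamma_mul_Gamma_eq_betaIntegral hu hv
  have hsum : (((1+s:ℝ)):ℂ) + (((1-s:ℝ)):ℂ) = 2 := by push_cast; ring
  rw [hsum] at hbeta
  have hG2 : Complex.Gamma 2 = 1 := by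
    have : (2:ℂ) = 1 + 1 := by norm_num
    rw [this, Complex.Gamma_add_one 1 one_ne_zero, Complex.Gamma_one, mul_one]
  rw [hG2, one_mul, Complex.Gamma_ofReal, Complex.Gamma_ofReal] at hbeta
  -- hbeta : ↑(Γ(1+s)) * ↑(Γ(1-s)) = betaIntegral (1+s) (1-s)
  have hbi : Complex.betaIntegral (((1+s:ℝ)):ℂ) (((1-s:ℝ)):ℂ)
      = ((∫ x in (0:ℝ)..1, x ^ s * (1 - x) ^ (-s) : ℝ) : ℂ) := by
    rw [Complex.betaIntegral, ← intervalIntegral.integral_ofReal]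
    apply intervalIntegral.integral_congr
    intro x hx
    rw [Set.uIcc_of_le (zero_le_one' ℝ)] at hx
    have hx0 : (0:ℝ) ≤ x := hx.1
    have hx1 : (0:ℝ) ≤ 1 - x := by linarith [hx.2]
    have e1 : (((1+s:ℝ)):ℂ) - 1 = ((s:ℝ):ℂ) := by push_cast; ring
    have e2 : (((1-s:ℝ)):ℂ) - 1 = ((-s:ℝ):ℂ) := by push_cast; ring
    have e3 : (1:ℂ) - (x:ℝ) = (((1-x:ℝ)):ℂ) := by push_cast; ring
    simp only [e1, e2, e3, ← Complex.ofReal_cpow hx0, ← Complex.ofReal_cpow hx1, ← Complex.ofReal_mul]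
  rw [hbi] at hbeta
  have := Complex.ofReal_inj.mp (by exact_mod_cast hbeta.symm)
  rw [← this, intervalIntegral.integral_of_le (zero_le_one' ℝ),
    MeasureTheory.integral_Ioc_eq_integral_Ioo]

lemma mgf_eq {s : ℝ} (h1 : -1 < s) (h2 : s < 1) :
    ∫ z : ℝ, Real.exp (s * z) * (Real.exp (-z) / (1 + Real.exp (-z)) ^ 2)
      = Real.Gamma (1+s) * Real.Gamma (1-s) := by
  set L : ℝ → ℝ := fun z => (1 + Real.exp (-z))⁻¹ with hLdef
  have hL' : ∀ z, HasDerivAt L (Real.exp (-z) / (1 + Real.exp (-z)) ^ 2) z := by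
    intro z
    have h : HasDerivAt (fun z : ℝ => 1 + Real.exp (-z)) (-Real.exp (-z)) z := by
      simpa using (((hasDerivAt_id z).neg).exp).const_add 1
    have h2 := h.inv (by positivity)
    refine h2.congr_deriv ?_
    ring
  have hmono : StrictMono L := by
    apply strictMono_of_deriv_pos
    intro z
    rw [(hL' z).deriv]
    positivity
  have hrange : L '' Set.univ = Set.Ioo 0 1 := by
    rw [Set.image_univ]
    ext y
    constructor
    · rintro ⟨z, rfl⟩
      constructor
      · positivity
      · rw [hLdef]
        have : (1:ℝ) < 1 + Real.exp (-z) := by linarith [Real.exp_pos (-z)]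
        simpa using inv_lt_one_of_one_lt₀ this
    · rintro ⟨hy0, hy1⟩
      refine ⟨-Real.log ((1-y)/y), ?_⟩
      have hpos : (0:ℝ) < (1-y)/y := div_pos (by linarith) hy0
      rw [hLdef]
      simp only [neg_neg]
      rw [Real.exp_log hpos]
      rw [inv_eq_iff_eq_inv, eq_comm]
      field_simp
      ring
  have sub := integral_image_eq_integral_abs_deriv_smul MeasurableSet.univ
    (fun x _ => (hL' x).hasDerivWithinAt) hmono.injective.injOn
    (fun y => y ^ s * (1-y) ^ (-s))
  rw [Set.image_univ] at sub
  rw [Set.image_univ] at hrange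
  rw [hrange, Measure.restrict_univ] at sub
  rw [← real_beta h1 h2, sub]
  apply integral_congr_ae
  filter_upwards with z
  have hLz : 0 < L z := by positivity
  have hfz : (0:ℝ) < Real.exp (-z) / (1 + Real.exp (-z)) ^ 2 := by positivity
  have h1L : 1 - L z = Real.exp (-z) * L z := by
    rw [hLdef]
    have hd : (0:ℝ) < 1 + Real.exp (-z) := by positivity
    field_simp
    ring
  rw [abs_of_pos hfz, smul_eq_mul, h1L]
  rw [Real.mul_rpow (Real.exp_pos _).le hLz.le]
  have : L z ^ s * (Real.exp (-z) ^ (-s) * L z ^ (-s))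
      = (L z ^ s * L z ^ (-s)) * Real.exp (-z) ^ (-s) := by ring
  rw [this, ← Real.rpow_add hLz, add_neg_cancel, Real.rpow_zero, one_mul]
  rw [← Real.exp_mul]
  ring_nf

theorem logistic_first_moment_mgf (t : ℝ) (h1 : -1 < t) (h2 : t < 1) :
    ∫ z : ℝ, z * Real.exp (t * z) * (Real.exp (-z) / (1 + Real.exp (-z)) ^ 2)
      = if t = 0 then 0
        else π * (1 / Real.sin (π * t)) * (1 - π * t * (Real.cos (π * t) / Real.sin (π * t))) := by
  by_cases ht : t = 0
  · subst ht
    rw [if_pos rfl]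
    set G : ℝ → ℝ := fun z => z * Real.exp (0 * z) * (Real.exp (-z) / (1 + Real.exp (-z)) ^ 2)
      with hG
    have hodd : ∀ z, G (-z) = - G z := by
      intro z
      have key : Real.exp (-z) / (1 + Real.exp (-z)) ^ 2
          = Real.exp (-(-z)) / (1 + Real.exp (-(-z))) ^ 2 := by
        rw [neg_neg]
        rw [div_eq_div_iff (by positivity) (by positivity)]
        have e1 : Real.exp z * Real.exp (-z) = 1 := by rw [← Real.exp_add]; simp
        nlinarith [Real.exp_pos z, Real.exp_pos (-z)]
      rw [hG]
      simp only [zero_mul, Real.exp_zero, mul_one, one_mul]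
      rw [← key]
      ring
    have h0 : ∫ z : ℝ, G z = ∫ z : ℝ, G (-z) := (integral_neg_eq_self G volume).symm
    have h0' : ∫ z : ℝ, G (-z) = - ∫ z : ℝ, G z := by
      simp_rw [hodd]
      exact integral_neg G
    have : ∫ z : ℝ, G z = - ∫ z : ℝ, G z := h0.trans h0'
    linarith [this]
  · rw [if_neg ht]
    have habs : |t| < 1 := abs_lt.mpr ⟨h1, h2⟩
    have hsin : Real.sin (π * t) ≠ 0 := by
      rcases lt_or_gt_of_ne ht with htneg | htpos
      · have : Real.sin (π * (-t)) > 0 :=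
          Real.sin_pos_of_pos_of_lt_pi (by nlinarith [Real.pi_pos])
            (by nlinarith [Real.pi_pos])
        rw [mul_neg, Real.sin_neg] at this
        linarith
      · have : Real.sin (π * t) > 0 :=
          Real.sin_pos_of_pos_of_lt_pi (by positivity) (by nlinarith [Real.pi_pos])
        linarith
    -- derivative under integral
    set ε : ℝ := (1 - |t|) / 2 with hε
    have hεpos : 0 < ε := by rw [hε]; linarith
    have hbound : ∀ z : ℝ, ∀ s ∈ Metric.ball t ε,
        ‖z * Real.exp (s * z) * (Real.exp (-z) / (1 + Real.exp (-z)) ^ 2)‖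
          ≤ |z| ^ 1 * Real.exp (-(ε * |z|)) := by
      intro z s hs
      rw [Metric.mem_ball, Real.dist_eq] at hs
      have habs_s : |s| < |t| + ε := by
        calc |s| = |s - t + t| := by ring_nf
          _ ≤ |s - t| + |t| := abs_add_le _ _
          _ < ε + |t| := by linarith
          _ = |t| + ε := by ring
      have hs1' : |s| < 1 := by rw [hε] at habs_s; linarith
      have hfz : (0:ℝ) < Real.exp (-z) / (1 + Real.exp (-z)) ^ 2 := by positivity
      calc ‖z * Real.exp (s * z) * (Real.exp (-z) / (1 + Real.exp (-z)) ^ 2)‖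
          = |z| * (Real.exp (s * z) * (Real.exp (-z) / (1 + Real.exp (-z)) ^ 2)) := by
            rw [Real.norm_eq_abs, abs_mul, abs_mul, abs_of_nonneg (Real.exp_pos _).le,
              abs_of_nonneg hfz.le, mul_assoc]
        _ ≤ |z| * Real.exp (-((1 - |s|) * |z|)) := by
            gcongr
            exact exp_mul_logf_le hs1' z
        _ ≤ |z| ^ 1 * Real.exp (-(ε * |z|)) := by
            rw [pow_one]
            gcongr
            rw [hε] at habs_s ⊢
            linarith
    have hdiff : ∀ z : ℝ, ∀ s ∈ Metric.ball t ε,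
        HasDerivAt (fun s => Real.exp (s * z) * (Real.exp (-z) / (1 + Real.exp (-z)) ^ 2))
          (z * Real.exp (s * z) * (Real.exp (-z) / (1 + Real.exp (-z)) ^ 2)) s := by
      intro z s _
      have h := (((hasDerivAt_id s).mul_const z).exp).mul_const
        (Real.exp (-z) / (1 + Real.exp (-z)) ^ 2)
      refine h.congr_deriv ?_
      simp only [id_eq, one_mul]
      ring
    have hD := hasDerivAt_integral_of_dominated_loc_of_deriv_le (μ := volume) (𝕜 := ℝ)
      (F := fun s z => Real.exp (s * z) * (Real.exp (-z) / (1 + Real.exp (-z)) ^ 2))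
      (F' := fun s z => z * Real.exp (s * z) * (Real.exp (-z) / (1 + Real.exp (-z)) ^ 2))
      (x₀ := t) (bound := fun z => |z| ^ 1 * Real.exp (-(ε * |z|))) (Metric.ball_mem_nhds t hεpos)
      (Filter.Eventually.of_forall fun s =>
        ((Real.continuous_exp.comp (continuous_const.mul continuous_id)).mul
          cont_logf).aestronglyMeasurable)
      (integ0 habs)
      (((continuous_id.mul (Real.continuous_exp.comp (continuous_const.mul continuous_id))).mul
        cont_logf).aestronglyMeasurable)
      (Filter.Eventually.of_forall hbound)
      (int_bound 1 hεpos)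
      (Filter.Eventually.of_forall hdiff)
    have hmem : Set.Ioo (-1:ℝ) 1 \ {0} ∈ nhds t := by
      apply IsOpen.mem_nhds
      · exact isOpen_Ioo.sdiff isClosed_singleton
      · exact ⟨⟨h1, h2⟩, ht⟩
    have heq : (fun s => ∫ z : ℝ, Real.exp (s * z) * (Real.exp (-z) / (1 + Real.exp (-z)) ^ 2))
        =ᶠ[nhds t] fun s => s * (π / Real.sin (π * s)) := by
      apply Filter.eventuallyEq_of_mem hmem
      rintro s ⟨⟨hs1, hs2⟩, hs0⟩
      simp only [Set.mem_singleton_iff] at hs0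
      show (∫ z : ℝ, Real.exp (s * z) * (Real.exp (-z) / (1 + Real.exp (-z)) ^ 2))
        = s * (π / Real.sin (π * s))
      rw [mgf_eq hs1 hs2]
      rw [add_comm (1:ℝ) s, Real.Gamma_add_one hs0, mul_assoc, Real.Gamma_mul_Gamma_one_sub]
    have hsin' : HasDerivAt (fun s : ℝ => Real.sin (π * s)) (Real.cos (π * t) * π) t := by
      simpa using ((hasDerivAt_id t).const_mul π).sin
    have hDh : HasDerivAt (fun s => s * (π / Real.sin (π * s)))
        (1 * (π / Real.sin (π * t)) +
          t * ((0 * Real.sin (π * t) - π * (Real.cos (π * t) * π)) / Real.sin (π * t) ^ 2)) t :=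
      (hasDerivAt_id t).mul ((hasDerivAt_const t π).div hsin' hsin)
    have hD2 := heq.hasDerivAt_iff.mpr hDh
    have hfinal : (∫ z : ℝ, z * Real.exp (t * z) * (Real.exp (-z) / (1 + Real.exp (-z)) ^ 2))
        = 1 * (π / Real.sin (π * t)) +
          t * ((0 * Real.sin (π * t) - π * (Real.cos (π * t) * π)) / Real.sin (π * t) ^ 2) :=
      hD.2.unique hD2
    rw [hfinal]
    field_simp
    ring
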